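/- arXiv:1009.0256 — 10 statements merged into one kernel-verified Lean document; each statement's English description precedes it below -/
import Mathlib

section
/- Let R and k be positive real constants and set c = log₂(k/2). If p : ℝ → ℝ is periodic with period 1, then the function f defined on (1/R, ∞) by f(x) = ((ln(xR))^c / (xR)) · p(log₂(ln(xR))) satisfies the functional equation f(x²R) = (k/(2xR))·f(x) for every x > 1/R. -/
/-- For `R, k > 0`, `c = log₂(k/2)`, and `p` periodic with period 1,
the function `f(x) = ((ln(xR))^c / (xR)) · p(log₂(ln(xR)))` on `(1/R, ∞)` satisfies
`f(x²R) = (k/(2xR))·f(x)` for all `x > 1/R`. -/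
theorem stmt1 (R k : ℝ) (hR : 0 < R) (hk : 0 < k)
    (c : ℝ) (hc : c = Real.logb 2 (k / 2))
    (p : ℝ → ℝ) (hper : ∀ s, p (s + 1) = p s)
    (f : ℝ → ℝ)
    (hf : ∀ x, 1 / R < x →
      f x = ((Real.log (x * R)) ^ c / (x * R)) * p (Real.logb 2 (Real.log (x * R)))) :
    ∀ x, 1 / R < x → f (x ^ 2 * R) = (k / (2 * x * R)) * f x := by
  intro x hx
  have hu : 1 < x * R := by
    rw [div_lt_iff₀ hR] at hx; linarith
  have hx0 : 0 < x := lt_trans (by positivity) hx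
  have hlog : 0 < Real.log (x * R) := Real.log_pos hu
  have hx2 : 1 / R < x ^ 2 * R := by
    rw [div_lt_iff₀ hR]
    nlinarith
  rw [hf x hx, hf _ hx2]
  have harg : x ^ 2 * R * R = (x * R) ^ 2 := by ring
  rw [harg]
  have hlog2 : Real.log ((x * R) ^ 2) = 2 * Real.log (x * R) := by
    rw [Real.log_pow]; push_cast; ring
  rw [hlog2]
  have h2c : (2 : ℝ) ^ c = k / 2 := by
    rw [hc, Real.rpow_logb (by norm_num) (by norm_num) (by positivity)]
  have hmul : (2 * Real.log (x * R)) ^ c = (k / 2) * (Real.log (x * R)) ^ c := by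
    rw [Real.mul_rpow (by norm_num) hlog.le, h2c]
  rw [hmul]
  have hlb : Real.logb 2 (2 * Real.log (x * R))
      = Real.logb 2 (Real.log (x * R)) + 1 := by
    rw [Real.logb, Real.logb, Real.log_mul (by norm_num) hlog.ne']
    have h2 : Real.log 2 ≠ 0 := ne_of_gt (Real.log_pos one_lt_two)
    field_simp
    ring
  rw [hlb, hper]
  have hu0 : (0 : ℝ) < x * R := by positivity
  field_simp
end

section
/- Let R and k be positive real constants and set c = log₂(k/2). Suppose f : ℝ → ℝ satisfies f(x²R) = (k/(2xR))·f(x) for every x > 1/R. Define p : ℝ → ℝ by p(s) = (2/k)^s · exp(2^s) · f(exp(2^s)/R). Then p is periodic with period 1, and f(x) = ((ln(xR))^c / (xR)) · p(log₂(ln(xR))) for every x > 1/R. -/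
/-- If `f` satisfies `f(x²R) = (k/(2xR))·f(x)` for `x > 1/R`, then the function
`p(s) = (2/k)^s · exp(2^s) · f(exp(2^s)/R)` is periodic with period 1 and
`f(x) = ((ln(xR))^c / (xR)) · p(log₂(ln(xR)))` for `x > 1/R`, where `c = log₂(k/2)`. -/
theorem stmt2 (R k : ℝ) (hR : 0 < R) (hk : 0 < k)
    (c : ℝ) (hc : c = Real.logb 2 (k / 2))
    (f : ℝ → ℝ)
    (hf : ∀ x, 1 / R < x → f (x ^ 2 * R) = (k / (2 * x * R)) * f x)
    (p : ℝ → ℝ)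
    (hp : ∀ s : ℝ, p s = (2 / k) ^ s * Real.exp ((2 : ℝ) ^ s) * f (Real.exp ((2 : ℝ) ^ s) / R)) :
    (∀ s, p (s + 1) = p s) ∧
      (∀ x, 1 / R < x →
        f x = ((Real.log (x * R)) ^ c / (x * R)) * p (Real.logb 2 (Real.log (x * R)))) := by
  have hk' : k ≠ 0 := ne_of_gt hk
  have hR' : R ≠ 0 := ne_of_gt hR
  constructor
  · intro s
    have h2s : (0:ℝ) < (2:ℝ) ^ s := Real.rpow_pos_of_pos two_pos s
    set x : ℝ := Real.exp ((2:ℝ) ^ s) / R with hxdef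
    have hx1 : 1 / R < x := by
      rw [hxdef, div_lt_div_iff_of_pos_right hR]
      nlinarith [Real.add_one_le_exp ((2:ℝ) ^ s)]
    have hsq : x ^ 2 * R = Real.exp ((2:ℝ) ^ (s + 1)) / R := by
      have h1 : (2:ℝ) ^ (s + 1) = (2:ℝ) ^ s + (2:ℝ) ^ s := by
        rw [Real.rpow_add two_pos, Real.rpow_one]; ring
      rw [hxdef, h1, Real.exp_add]
      field_simp
    have heq := hf x hx1
    rw [hsq] at heq
    have hexp : Real.exp ((2:ℝ) ^ s) ≠ 0 := Real.exp_ne_zero _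
    rw [hp (s + 1), hp s, heq]
    have h1 : (2:ℝ) ^ (s + 1) = (2:ℝ) ^ s + (2:ℝ) ^ s := by
      rw [Real.rpow_add two_pos, Real.rpow_one]; ring
    have h2 : (2 / k : ℝ) ^ (s + 1) = (2 / k) ^ s * (2 / k) := by
      rw [Real.rpow_add (by positivity), Real.rpow_one]
    rw [h1, h2, Real.exp_add, hxdef]
    field_simp
  · intro x hx
    have hxR : 1 < x * R := (div_lt_iff₀ hR).mp hx
    have hxR0 : 0 < x * R := lt_trans one_pos hxR
    have hlog : 0 < Real.log (x * R) := Real.log_pos hxR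
    set s : ℝ := Real.logb 2 (Real.log (x * R)) with hsdef
    have h2s : (2:ℝ) ^ s = Real.log (x * R) :=
      Real.rpow_logb two_pos (by norm_num) hlog
    have hexp : Real.exp ((2:ℝ) ^ s) = x * R := by
      rw [h2s, Real.exp_log hxR0]
    have harg : x * R / R = x := by
      rw [mul_div_assoc, div_self hR', mul_one]
    have hkey : (Real.log (x * R)) ^ c * (2 / k) ^ s = 1 := by
      have hk2 : (k / 2 : ℝ) = (2:ℝ) ^ c := by
        rw [hc, Real.rpow_logb two_pos (by norm_num) (by positivity)]
      have h2k : (2 / k : ℝ) = (2:ℝ) ^ (-c) := by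
        rw [Real.rpow_neg (by norm_num), ← hk2]
        field_simp
      rw [← h2s, h2k]
      rw [← Real.rpow_mul (by norm_num : (0:ℝ) ≤ 2), ← Real.rpow_mul (by norm_num : (0:ℝ) ≤ 2)]
      rw [← Real.rpow_add two_pos]
      rw [show s * c + -c * s = 0 by ring, Real.rpow_zero]
    rw [hp s, hexp, harg]
    have : (Real.log (x * R)) ^ c / (x * R) * ((2 / k) ^ s * (x * R) * f x)
        = ((Real.log (x * R)) ^ c * (2 / k) ^ s) * f x := by
      field_simp
      rw [mul_comm x, mul_div_cancel_right₀ _ (by rintro rfl; simp at hxR0)]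
    rw [this, hkey, one_mul]
end

section
/- Let R > 0 and let p : ℝ → ℝ be periodic with period 1. If the function f defined on (1/R, ∞) by f(x) = p(log₂(ln(xR))) / (xR) is monotone on (1/R, ∞) (either nondecreasing or nonincreasing), then p is constant. -/
open Filter Topology

theorem stmt5_aux (R : ℝ) (hR : 0 < R)
    (p : ℝ → ℝ) (hper : ∀ s, p (s + 1) = p s)
    (f : ℝ → ℝ)
    (hf : ∀ x, 1 / R < x → f x = p (Real.logb 2 (Real.log (x * R))) / (x * R))
    (hmono : MonotoneOn f (Set.Ioi (1 / R))) :
    ∀ s t, p s = p t := by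
  have hp : Function.Periodic p 1 := hper
  have hpz : ∀ (x : ℝ) (n : ℤ), p (x - n) = p x := by
    intro x n
    simpa using hp.sub_int_mul_eq (x := x) n
  set q : ℝ → ℝ := fun s => p s * Real.exp (-(2:ℝ) ^ s) with hq
  have hx : ∀ s : ℝ, Real.exp ((2:ℝ) ^ s) / R ∈ Set.Ioi (1 / R) := by
    intro s
    have h1 : (0:ℝ) < (2:ℝ) ^ s := Real.rpow_pos_of_pos two_pos s
    have h2 : (1:ℝ) < Real.exp ((2:ℝ) ^ s) := by
      calc (1:ℝ) = Real.exp 0 := by simp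
        _ < Real.exp ((2:ℝ) ^ s) := Real.exp_lt_exp.mpr h1
    simp only [Set.mem_Ioi]
    gcongr
  have hfq : ∀ s : ℝ, f (Real.exp ((2:ℝ) ^ s) / R) = q s := by
    intro s
    rw [hf _ (hx s)]
    rw [div_mul_cancel₀ _ hR.ne', Real.log_exp,
      Real.logb_rpow (b := 2) two_pos (by norm_num)]
    simp [hq, Real.exp_neg, div_eq_mul_inv]
  have hqmono : Monotone q := by
    intro s t hst
    rw [← hfq s, ← hfq t]
    apply hmono (hx s) (hx t)
    have h5 : Real.exp ((2:ℝ) ^ s) ≤ Real.exp ((2:ℝ) ^ t) :=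
      Real.exp_le_exp.mpr (Real.rpow_le_rpow_of_exponent_le one_le_two hst)
    gcongr
  have qlim : ∀ x : ℝ, Tendsto (fun n : ℕ => q (x - n)) atTop (𝓝 (p x)) := by
    intro x
    have h2 : Tendsto (fun n : ℕ => (2:ℝ) ^ (x - (n:ℝ))) atTop (𝓝 0) := by
      have he : ∀ n : ℕ, (2:ℝ) ^ (x - (n:ℝ)) = (2:ℝ) ^ x / 2 ^ n := by
        intro n
        rw [Real.rpow_sub two_pos, Real.rpow_natCast]
      simp_rw [he]
      exact tendsto_const_nhds.div_atTop (tendsto_pow_atTop_atTop_of_one_lt one_lt_two)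
    have h3 : Tendsto (fun n : ℕ => Real.exp (-(2:ℝ) ^ (x - (n:ℝ)))) atTop (𝓝 1) := by
      have h2n := h2.neg
      rw [neg_zero] at h2n
      have := (Real.continuous_exp.tendsto 0).comp h2n
      simpa [Function.comp_def] using this
    have h4 := h3.const_mul (p x)
    rw [mul_one] at h4
    refine h4.congr fun n => ?_
    have hpn : p (x - (n : ℝ)) = p x := by
      have := hpz x (n : ℤ); push_cast at this; exact this
    simp only [hq]
    rw [hpn]
  -- key: for s ≤ t ≤ s + 1, p s = p t
  have key : ∀ s t : ℝ, s ≤ t → t ≤ s + 1 → p s = p t := by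
    intro s t h1 h2
    have hle1 : p s ≤ p t := by
      refine le_of_tendsto_of_tendsto' (qlim s) (qlim t) fun n => ?_
      exact hqmono (by linarith)
    have hle2 : p t ≤ p (s + 1) := by
      refine le_of_tendsto_of_tendsto' (qlim t) (qlim (s + 1)) fun n => ?_
      exact hqmono (by linarith)
    rw [hper s] at hle2
    linarith
  intro s t
  have hfl : s ≤ t - (⌊t - s⌋ : ℤ) := by
    have := Int.floor_le (t - s); linarith
  have hfu : t - (⌊t - s⌋ : ℤ) ≤ s + 1 := by
    have := Int.lt_floor_add_one (t - s); linarith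
  rw [← hpz t ⌊t - s⌋]
  exact key s _ hfl hfu

/-- For `R > 0` and `p` periodic with period 1, if
`f(x) = p(log₂(ln(xR))) / (xR)` is monotone on `(1/R, ∞)` (nondecreasing or nonincreasing),
then `p` is constant. -/
theorem stmt5 (R : ℝ) (hR : 0 < R)
    (p : ℝ → ℝ) (hper : ∀ s, p (s + 1) = p s)
    (f : ℝ → ℝ)
    (hf : ∀ x, 1 / R < x → f x = p (Real.logb 2 (Real.log (x * R))) / (x * R))
    (hmono : MonotoneOn f (Set.Ioi (1 / R)) ∨ AntitoneOn f (Set.Ioi (1 / R))) :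
    ∀ s t, p s = p t := by
  rcases hmono with h | h
  · exact stmt5_aux R hR p hper f hf h
  · have := stmt5_aux R hR (fun s => -p s) (fun s => by simp [hper s])
      (fun x => -f x) (fun x hx => by show -f x = -p _ / (x * R); rw [hf x hx]; ring) (fun a ha b hb hab => by
        simpa using h ha hb hab)
    intro s t
    have := this s t
    simpa using this
end

section
/- Let R > 0 and take k = 2. If f : ℝ → ℝ satisfies f(x²R) = (2/(2xR))·f(x) = f(x)/(xR) for all x > 1/R and f is monotone on (1/R, ∞) (either nondecreasing or nonincreasing), then there exists λ ∈ ℝ such that f(x) = λ/(xR) for all x > 1/R. -/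
open Filter Topology

private lemma stmt6_aux (R : ℝ) (hR : 0 < R) (f : ℝ → ℝ)
    (hf : ∀ x, 1 / R < x → f (x ^ 2 * R) = f x / (x * R))
    (hmono : MonotoneOn f (Set.Ioi (1 / R))) :
    ∃ lam : ℝ, ∀ x, 1 / R < x → f x = lam / (x * R) := by
  have hR' : R ≠ 0 := ne_of_gt hR
  set g : ℝ → ℝ := fun t => t * R * f t with hgdef
  -- g is invariant under t ↦ t² R
  have hstep : ∀ t, 1 / R < t → g (t ^ 2 * R) = g t := by
    intro t ht
    have ht0 : 0 < t := lt_trans (by positivity) ht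
    simp only [hgdef, hf t ht]
    field_simp
  have hbase : ∀ x, 1 / R < x → 1 < R * x := by
    intro x hx
    rw [div_lt_iff₀ hR] at hx
    linarith
  -- backward iterates
  set p : ℕ → ℝ → ℝ := fun n x => (R * x) ^ (((1:ℝ)/2) ^ n) / R with hpdef
  have hpgt : ∀ n x, 1 / R < x → 1 / R < p n x := by
    intro n x hx
    have h1 : 1 < (R * x) ^ (((1:ℝ)/2) ^ n) := by
      rw [Real.one_lt_rpow_iff_of_pos (by linarith [hbase x hx])]
      exact Or.inl ⟨hbase x hx, by positivity⟩
    simp only [hpdef]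
    exact (div_lt_div_iff_of_pos_right hR).mpr h1
  have hppos : ∀ n x, 1 / R < x → 0 < p n x := fun n x hx =>
    lt_trans (by positivity) (hpgt n x hx)
  have hpsucc : ∀ n x, 1 / R < x → (p (n+1) x) ^ 2 * R = p n x := by
    intro n x hx
    have hRx : (0:ℝ) ≤ R * x := le_of_lt (lt_trans one_pos (hbase x hx))
    simp only [hpdef]
    rw [div_pow]
    have h2 : ((R * x) ^ (((1:ℝ)/2) ^ (n+1))) ^ 2
        = (R * x) ^ (((1:ℝ)/2) ^ n) := by
      rw [← Real.rpow_natCast ((R * x) ^ (((1:ℝ)/2) ^ (n+1))) 2,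
        ← Real.rpow_mul hRx]
      norm_num [pow_succ]
      ring_nf
    rw [h2]
    field_simp
  have hgp : ∀ n x, 1 / R < x → g (p n x) = g x := by
    intro n x hx
    induction n with
    | zero =>
      simp only [hpdef, pow_zero, Real.rpow_one]
      rw [mul_comm R x, mul_div_assoc, div_self hR', mul_one]
    | succ n ih =>
      rw [← ih, ← hpsucc n x hx]
      exact (hstep _ (hpgt (n+1) x hx)).symm
  -- p n x → 1/R
  have htend : ∀ x, 1 / R < x → Tendsto (fun n => p n x) atTop (𝓝 (1 / R)) := by
    intro x hx
    have hRx : (0:ℝ) < R * x := lt_trans one_pos (hbase x hx)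
    have h0 : Tendsto (fun n : ℕ => ((1:ℝ)/2) ^ n) atTop (𝓝 0) :=
      tendsto_pow_atTop_nhds_zero_of_lt_one (by norm_num) (by norm_num)
    have h1 : Tendsto (fun n : ℕ => (R * x) ^ (((1:ℝ)/2) ^ n)) atTop
        (𝓝 ((R * x) ^ (0:ℝ))) :=
      (Real.continuousAt_const_rpow (ne_of_gt hRx)).tendsto.comp h0
    rw [Real.rpow_zero] at h1
    simpa only [hpdef] using h1.div_const R
  -- p is monotone in x
  have hpmono : ∀ n a b, 1 / R < a → a ≤ b → p n a ≤ p n b := by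
    intro n a b ha hab
    have h0 : (0:ℝ) ≤ R * a := le_of_lt (lt_trans one_pos (hbase a ha))
    simp only [hpdef]
    exact div_le_div_of_nonneg_right
      (Real.rpow_le_rpow h0 (by nlinarith) (by positivity)) hR.le
  -- f on backward iterates
  have hfp : ∀ n x, 1 / R < x → f (p n x) = g x / (p n x * R) := by
    intro n x hx
    have h1 : p n x * R * f (p n x) = g x := hgp n x hx
    have h2 : p n x * R ≠ 0 := ne_of_gt (mul_pos (hppos n x hx) hR)
    rw [eq_div_iff h2, ← h1]
    ring
  -- key inequality: a ≤ b → g a ≤ g b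
  have key : ∀ a b, 1 / R < a → 1 / R < b → a ≤ b → g a ≤ g b := by
    intro a b ha hb hab
    have hle : ∀ n, g a * p n b ≤ g b * p n a := by
      intro n
      have h1 : f (p n a) ≤ f (p n b) :=
        hmono (hpgt n a ha) (hpgt n b hb) (hpmono n a b ha hab)
      rw [hfp n a ha, hfp n b hb] at h1
      rw [div_le_div_iff₀ (mul_pos (hppos n a ha) hR) (mul_pos (hppos n b hb) hR)] at h1
      nlinarith [h1, hppos n a ha, hppos n b hb, hR]
    have t1 : Tendsto (fun n => g a * p n b) atTop (𝓝 (g a * (1 / R))) :=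
      (htend b hb).const_mul _
    have t2 : Tendsto (fun n => g b * p n a) atTop (𝓝 (g b * (1 / R))) :=
      (htend a ha).const_mul _
    have := le_of_tendsto_of_tendsto' t1 t2 hle
    have hR1 : (0:ℝ) < 1 / R := by positivity
    exact le_of_mul_le_mul_right (by linarith [this]) hR1
  -- forward iterates to get the reverse inequality
  set q : ℕ → ℝ → ℝ := fun m x => (R * x) ^ (2 ^ m) / R with hqdef
  have hqgt : ∀ m x, 1 / R < x → 1 / R < q m x := by
    intro m x hx
    have h1 : 1 < (R * x) ^ (2 ^ m) :=
      one_lt_pow₀ (hbase x hx) (by positivity)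
    simp only [hqdef]
    exact (div_lt_div_iff_of_pos_right hR).mpr h1
  have hqsucc : ∀ m x, q (m+1) x = (q m x) ^ 2 * R := by
    intro m x
    simp only [hqdef]
    field_simp
    rw [pow_succ, pow_mul]
  have hgq : ∀ m x, 1 / R < x → g (q m x) = g x := by
    intro m x hx
    induction m with
    | zero =>
      simp only [hqdef, pow_zero, pow_one]
      rw [mul_comm R x, mul_div_assoc, div_self hR', mul_one]
    | succ m ih =>
      rw [hqsucc m x, hstep _ (hqgt m x hx), ih]
  have hqbig : ∀ a b, 1 / R < a → 1 / R < b → ∃ m, b ≤ q m a := by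
    intro a b ha hb
    obtain ⟨n, hn⟩ := pow_unbounded_of_one_lt (R * b) (hbase a ha)
    refine ⟨n, ?_⟩
    have h1 : (R * a) ^ n ≤ (R * a) ^ (2 ^ n) :=
      pow_le_pow_right₀ (le_of_lt (hbase a ha)) (le_of_lt (Nat.lt_two_pow_self (n := n)))
    have h2 : R * b ≤ (R * a) ^ (2 ^ n) := le_trans (le_of_lt hn) h1
    simp only [hqdef]
    rw [le_div_iff₀ hR]
    linarith
  have key2 : ∀ a b, 1 / R < a → 1 / R < b → a ≤ b → g b ≤ g a := by
    intro a b ha hb hab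
    obtain ⟨m, hm⟩ := hqbig a b ha hb
    have hq1 : 1 / R < q m a := hqgt m a ha
    have hle : ∀ n, g b * p n (q m a) ≤ g a * p n b := by
      intro n
      have h1 : f (p n b) ≤ f (p n (q m a)) :=
        hmono (hpgt n b hb) (hpgt n _ hq1) (hpmono n b _ hb hm)
      rw [hfp n b hb, hfp n _ hq1] at h1
      rw [div_le_div_iff₀ (mul_pos (hppos n b hb) hR) (mul_pos (hppos n _ hq1) hR)] at h1
      rw [hgq m a ha] at h1
      nlinarith [h1, hppos n b hb, hppos n _ hq1, hR]
    have t1 : Tendsto (fun n => g b * p n (q m a)) atTop (𝓝 (g b * (1 / R))) :=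
      (htend _ hq1).const_mul _
    have t2 : Tendsto (fun n => g a * p n b) atTop (𝓝 (g a * (1 / R))) :=
      (htend b hb).const_mul _
    have := le_of_tendsto_of_tendsto' t1 t2 hle
    have hR1 : (0:ℝ) < 1 / R := by positivity
    exact le_of_mul_le_mul_right (by linarith [this]) hR1
  -- g is constant
  have h2R : 1 / R < 2 / R := by
    rw [div_lt_div_iff_of_pos_right hR]; norm_num
  refine ⟨g (2 / R), ?_⟩
  intro x hx
  have hgx : g x = g (2 / R) := by
    rcases le_total x (2 / R) with h | h
    · exact le_antisymm (key x _ hx h2R h) (key2 x _ hx h2R h)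
    · exact le_antisymm (key2 _ x h2R hx h) (key _ x h2R hx h)
  have hx0 : 0 < x := lt_trans (by positivity) hx
  rw [eq_div_iff (by positivity : x * R ≠ 0), ← hgx]
  simp only [hgdef]
  ring

/-- For `R > 0` and `k = 2`: if `f` satisfies `f(x²R) = f(x)/(xR)` for all
`x > 1/R` and `f` is monotone on `(1/R, ∞)`, then `f(x) = λ/(xR)` on `(1/R, ∞)` for some
`λ ∈ ℝ`. -/
theorem stmt6 (R : ℝ) (hR : 0 < R) (f : ℝ → ℝ)
    (hf : ∀ x, 1 / R < x → f (x ^ 2 * R) = f x / (x * R))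
    (hmono : MonotoneOn f (Set.Ioi (1 / R)) ∨ AntitoneOn f (Set.Ioi (1 / R))) :
    ∃ lam : ℝ, ∀ x, 1 / R < x → f x = lam / (x * R) := by
  rcases hmono with h | h
  · exact stmt6_aux R hR f hf h
  · have hf' : ∀ x, 1 / R < x → (fun t => -f t) (x ^ 2 * R) = (fun t => -f t) x / (x * R) := by
      intro x hx
      simp only [hf x hx, neg_div]
    obtain ⟨lam, hlam⟩ := stmt6_aux R hR (fun t => -f t) hf' h.neg
    refine ⟨-lam, fun x hx => ?_⟩
    have := hlam x hx
    rw [neg_div]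
    linarith
end

section
/- Let R > 0 and let c < 0 be a real number. Let m > 0 and let p : ℝ → ℝ be differentiable, periodic with period 1, and satisfy p(s) ≥ m and |p'(s)| ≤ (−c)·m·ln 2 for all s ∈ ℝ. Then the function f defined on (1/R, ∞) by f(x) = ((ln(xR))^c / (xR)) · p(log₂(ln(xR))) is monotone nonincreasing on (1/R, ∞): for all x, y with 1/R < x ≤ y one has f(x) ≥ f(y). -/
/-- For `R > 0`, `c < 0`, `m > 0`, and `p` differentiable, 1-periodic, with
`p ≥ m` and `|p'| ≤ (−c)·m·ln 2` everywhere, the function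
`f(x) = ((ln(xR))^c / (xR)) · p(log₂(ln(xR)))` is monotone nonincreasing on `(1/R, ∞)`. -/
theorem stmt8 (R : ℝ) (hR : 0 < R) (c : ℝ) (hc : c < 0) (m : ℝ) (hm : 0 < m)
    (p : ℝ → ℝ) (hpdiff : Differentiable ℝ p) (hper : ∀ s, p (s + 1) = p s)
    (hpm : ∀ s, m ≤ p s) (hp' : ∀ s, |deriv p s| ≤ (-c) * m * Real.log 2)
    (f : ℝ → ℝ)
    (hf : ∀ x, 1 / R < x →
      f x = ((Real.log (x * R)) ^ c / (x * R)) * p (Real.logb 2 (Real.log (x * R)))) :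
    ∀ x y, 1 / R < x → x ≤ y → f x ≥ f y := by
  have hlog2 : (0:ℝ) < Real.log 2 := Real.log_pos one_lt_two
  set g : ℝ → ℝ := fun x =>
    (Real.log (x * R)) ^ c / (x * R) * p (Real.logb 2 (Real.log (x * R))) with hgdef
  have key : ∀ x, 1 / R < x → ∃ d, HasDerivAt g d x ∧ d ≤ 0 := by
    intro x hx
    have hx0 : 0 < x := lt_trans (by positivity) hx
    have hu : 1 < x * R := (div_lt_iff₀ hR).mp hx
    have hu0 : 0 < x * R := by positivity
    have hL : 0 < Real.log (x * R) := Real.log_pos hu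
    set L := Real.log (x * R) with hLdef
    set s := Real.logb 2 L with hsdef
    have h1 : HasDerivAt (fun x : ℝ => x * R) R x := by
      simpa using (hasDerivAt_id x).mul_const R
    have h2 : HasDerivAt (fun x : ℝ => Real.log (x * R)) ((x * R)⁻¹ * R) x :=
      by have := (Real.hasDerivAt_log hu0.ne').comp x h1; exact this
    have h3 : HasDerivAt (fun x : ℝ => (Real.log (x * R)) ^ c)
        (c * L ^ (c - 1) * ((x * R)⁻¹ * R)) x :=
      by have := (Real.hasDerivAt_rpow_const (p := c) (Or.inl hL.ne')).comp x h2; exact this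
    have h4 : HasDerivAt (fun x : ℝ => (x * R)⁻¹) (-R / (x * R) ^ 2) x :=
      h1.inv hu0.ne'
    have h5 : HasDerivAt (fun x : ℝ => Real.log (Real.log (x * R)))
        (L⁻¹ * ((x * R)⁻¹ * R)) x :=
      by have := (Real.hasDerivAt_log hL.ne').comp x h2; exact this
    have h6 : HasDerivAt (fun x : ℝ => Real.logb 2 (Real.log (x * R)))
        (L⁻¹ * ((x * R)⁻¹ * R) / Real.log 2) x := by
      simpa [Real.logb, div_eq_mul_inv] using h5.div_const (Real.log 2)
    have h7 : HasDerivAt (fun x : ℝ => p (Real.logb 2 (Real.log (x * R))))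
        (deriv p s * (L⁻¹ * ((x * R)⁻¹ * R) / Real.log 2)) x :=
      (hpdiff s).hasDerivAt.comp x h6
    have hg' : HasDerivAt g
        ((c * L ^ (c - 1) * ((x * R)⁻¹ * R) * (x * R)⁻¹ + L ^ c * (-R / (x * R) ^ 2)) * p s
          + L ^ c * (x * R)⁻¹ * (deriv p s * (L⁻¹ * ((x * R)⁻¹ * R) / Real.log 2))) x := by
      have := (h3.mul h4).mul h7
      exact this
    refine ⟨_, hg', ?_⟩
    have hLc : L ^ c = L ^ (c - 1) * L := by
      rw [← Real.rpow_add_one hL.ne' (c - 1)]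
      norm_num
    have hbr : c * p s - L * p s + deriv p s / Real.log 2 ≤ 0 := by
      have hps := hpm s
      have hd : deriv p s ≤ (-c) * m * Real.log 2 := (abs_le.mp (hp' s)).2
      have hd2 : deriv p s / Real.log 2 ≤ (-c) * m := by
        rw [div_le_iff₀ hlog2]; linarith
      have hcp : c * p s ≤ c * m := by nlinarith
      nlinarith [mul_pos hL (lt_of_lt_of_le hm hps)]
    have hrw : (c * L ^ (c - 1) * ((x * R)⁻¹ * R) * (x * R)⁻¹ + L ^ c * (-R / (x * R) ^ 2)) * p s
          + L ^ c * (x * R)⁻¹ * (deriv p s * (L⁻¹ * ((x * R)⁻¹ * R) / Real.log 2))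
        = (R / (x * R) ^ 2 * L ^ (c - 1))
          * (c * p s - L * p s + deriv p s / Real.log 2) := by
      rw [hLc]
      field_simp
      ring
    rw [hrw]
    have hpos : 0 ≤ R / (x * R) ^ 2 * L ^ (c - 1) := by positivity
    exact mul_nonpos_of_nonneg_of_nonpos hpos hbr
  have hanti : AntitoneOn g (Set.Ioi (1 / R)) := by
    apply antitoneOn_of_deriv_nonpos (convex_Ioi _)
    · intro x hx
      obtain ⟨d, hd, _⟩ := key x hx
      exact hd.differentiableAt.continuousAt.continuousWithinAt
    · intro x hx
      rw [interior_Ioi] at hx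
      obtain ⟨d, hd, _⟩ := key x hx
      exact hd.differentiableAt.differentiableWithinAt
    · intro x hx
      rw [interior_Ioi] at hx
      obtain ⟨d, hd, hd0⟩ := key x hx
      rw [hd.deriv]
      exact hd0
  intro x y hx hxy
  have hy : 1 / R < y := lt_of_lt_of_le hx hxy
  rw [hf x hx, hf y hy]
  exact hanti hx hy hxy
end

section
/- Let R and k be positive real constants and set c = log₂(k/2). If p : ℝ → ℝ is periodic with period 1, then the function f defined on (0, 1/R) by f(x) = ((−ln(xR))^c / (xR)) · p(log₂(−ln(xR))) satisfies the functional equation f(x²R) = (k/(2xR))·f(x) for every x with 0 < x < 1/R. -/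
/-- For `R, k > 0`, `c = log₂(k/2)`, and `p` 1-periodic, the function
`f(x) = ((−ln(xR))^c / (xR)) · p(log₂(−ln(xR)))` on `(0, 1/R)` satisfies
`f(x²R) = (k/(2xR))·f(x)` for all `0 < x < 1/R`. -/
theorem stmt9 (R k : ℝ) (hR : 0 < R) (hk : 0 < k)
    (c : ℝ) (hc : c = Real.logb 2 (k / 2))
    (p : ℝ → ℝ) (hper : ∀ s, p (s + 1) = p s)
    (f : ℝ → ℝ)
    (hf : ∀ x, 0 < x → x < 1 / R →
      f x = ((-Real.log (x * R)) ^ c / (x * R)) * p (Real.logb 2 (-Real.log (x * R)))) :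
    ∀ x, 0 < x → x < 1 / R → f (x ^ 2 * R) = (k / (2 * x * R)) * f x := by
  intro x hx hxR
  have hu : 0 < x * R := mul_pos hx hR
  have hu1 : x * R < 1 := by
    have := (lt_div_iff₀ hR).mp hxR; linarith
  have hlog : 0 < -Real.log (x * R) := by
    have := Real.log_neg hu hu1; linarith
  have hx2 : 0 < x ^ 2 * R := by positivity
  have hx2R : x ^ 2 * R < 1 / R := by
    rw [lt_div_iff₀ hR]; nlinarith
  have key : x ^ 2 * R * R = (x * R) ^ 2 := by ring
  have hlog2 : -Real.log (x ^ 2 * R * R) = 2 * (-Real.log (x * R)) := by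
    rw [key, Real.log_pow]; push_cast; ring
  rw [hf _ hx2 hx2R, hf _ hx hxR, hlog2]
  have h2c : (2 : ℝ) ^ c = k / 2 := by
    rw [hc, Real.rpow_logb (by norm_num) (by norm_num) (by positivity)]
  have hmul : (2 * (-Real.log (x * R))) ^ c = (k / 2) * (-Real.log (x * R)) ^ c := by
    rw [Real.mul_rpow (by norm_num) hlog.le, h2c]
  have hlb : Real.logb 2 (2 * (-Real.log (x * R)))
      = Real.logb 2 (-Real.log (x * R)) + 1 := by
    rw [Real.logb_mul (by norm_num) (ne_of_gt hlog), Real.logb_self_eq_one (by norm_num : (1:ℝ)<2)]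
    ring
  rw [hmul, hlb, hper]
  have hne : x * R ≠ 0 := ne_of_gt hu
  field_simp [key]
end

section
/- Let R and k be positive real constants and set c = log₂(k/2). Suppose f : ℝ → ℝ satisfies f(x²R) = (k/(2xR))·f(x) for every x with 0 < x < 1/R. Then there exists a function p : ℝ → ℝ periodic with period 1 such that f(x) = ((−ln(xR))^c / (xR)) · p(log₂(−ln(xR))) for every x with 0 < x < 1/R. -/
/-- For `R, k > 0`, `c = log₂(k/2)`: if `f` satisfies
`f(x²R) = (k/(2xR))·f(x)` for all `0 < x < 1/R`, then there is a 1-periodic `p : ℝ → ℝ`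
with `f(x) = ((−ln(xR))^c / (xR)) · p(log₂(−ln(xR)))` for all `0 < x < 1/R`. -/
theorem stmt10 (R k : ℝ) (hR : 0 < R) (hk : 0 < k)
    (c : ℝ) (hc : c = Real.logb 2 (k / 2))
    (f : ℝ → ℝ)
    (hf : ∀ x, 0 < x → x < 1 / R → f (x ^ 2 * R) = (k / (2 * x * R)) * f x) :
    ∃ p : ℝ → ℝ, (∀ s, p (s + 1) = p s) ∧
      ∀ x, 0 < x → x < 1 / R →
        f x = ((-Real.log (x * R)) ^ c / (x * R)) * p (Real.logb 2 (-Real.log (x * R))) := by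
  have h2 : (0:ℝ) < 2 := by norm_num
  have h2c : (2:ℝ) ^ c = k / 2 := by
    rw [hc]; exact Real.rpow_logb h2 (by norm_num) (by positivity)
  refine ⟨fun s => f (Real.exp (-(2:ℝ) ^ s) / R) * Real.exp (-(2:ℝ) ^ s) / ((2:ℝ) ^ s) ^ c,
    ?_, ?_⟩
  · intro s
    have ht : (0:ℝ) < (2:ℝ) ^ s := Real.rpow_pos_of_pos h2 s
    set t : ℝ := (2:ℝ) ^ s with htdef
    set x : ℝ := Real.exp (-t) / R with hxdef
    have hx : 0 < x := by positivity
    have hxR : x * R = Real.exp (-t) := by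
      rw [hxdef, div_mul_cancel₀ _ hR.ne']
    have hx1 : x < 1 / R := by
      rw [hxdef, div_lt_div_iff₀ (by positivity) hR]
      have : Real.exp (-t) < 1 := Real.exp_lt_one_iff.mpr (by linarith)
      nlinarith
    have hs1 : (2:ℝ) ^ (s + 1) = 2 * t := by
      rw [htdef, Real.rpow_add h2, Real.rpow_one]; ring
    have hx2 : Real.exp (-(2 * t)) / R = x ^ 2 * R := by
      rw [hxdef]
      have : Real.exp (-(2 * t)) = Real.exp (-t) ^ 2 := by
        rw [← Real.exp_nat_mul]; ring_nf
      rw [this]; field_simp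
    have hfx := hf x hx hx1
    simp only [hs1, hx2, hfx, hxR]
    have h2tc : (2 * t) ^ c = (2:ℝ) ^ c * t ^ c :=
      Real.mul_rpow (by norm_num) ht.le
    rw [h2tc, h2c]
    have htc : (0:ℝ) < t ^ c := Real.rpow_pos_of_pos ht c
    have hexp : Real.exp (-t) ≠ 0 := Real.exp_ne_zero _
    have : Real.exp (-(2 * t)) = Real.exp (-t) * Real.exp (-t) := by
      rw [← Real.exp_add]; ring_nf
    rw [this]
    have hR1 : R * R⁻¹ = 1 := mul_inv_cancel₀ hR.ne'
    field_simp
    linear_combination (-(f x * Real.exp (-t) ^ 2 * ((2:ℝ) ^ s) ^ c)) * hR1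
  · intro x hx hx1
    have hxR : 0 < x * R := by positivity
    have hxR1 : x * R < 1 := (lt_div_iff₀ hR).mp hx1
    have ht : 0 < -Real.log (x * R) := neg_pos.mpr (Real.log_neg hxR hxR1)
    set t : ℝ := -Real.log (x * R) with htdef
    have h2t : (2:ℝ) ^ Real.logb 2 t = t := Real.rpow_logb h2 (by norm_num) ht
    have hexp : Real.exp (-t) = x * R := by
      rw [htdef, neg_neg, Real.exp_log hxR]
    simp only [h2t, hexp]
    rw [mul_div_cancel_right₀ x hR.ne']
    have htc : (0:ℝ) < t ^ c := Real.rpow_pos_of_pos ht c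
    field_simp
end

section
/- Let R > 0 and let 0 < k < 2. Suppose f : ℝ → ℝ satisfies f(x²R) = (k/(2xR))·f(x) for every x > 1/R, and suppose f(x) tends to a finite limit as x → (1/R)⁺. Then f(x) = 0 for every x > 1/R. -/
noncomputable def seq11 (R y : ℝ) : ℕ → ℝ
  | 0 => y
  | n + 1 => Real.sqrt (seq11 R y n / R)

lemma seq11_gt (R y : ℝ) (hR : 0 < R) (hy : 1 / R < y) :
    ∀ n, 1 / R < seq11 R y n := by
  intro n
  induction n with
  | zero => exact hy
  | succ n ih =>
    have h0 : (0:ℝ) < 1 / R := by positivity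
    have h1 : (1 / R) ^ 2 < seq11 R y n / R := by
      have hs1 : 1 < seq11 R y n * R := (div_lt_iff₀ hR).1 ih
      rw [div_pow, one_pow, div_lt_div_iff₀ (by positivity) hR]
      nlinarith [mul_lt_mul_of_pos_right hs1 hR]
    exact (Real.lt_sqrt h0.le).2 h1

lemma seq11_sq (R y : ℝ) (hR : 0 < R) (hy : 1 / R < y) (n : ℕ) :
    (seq11 R y (n + 1)) ^ 2 * R = seq11 R y n := by
  have h := seq11_gt R y hR hy n
  have h0 : (0:ℝ) < 1 / R := by positivity
  have hnn : 0 ≤ seq11 R y n / R := div_nonneg (h0.trans h).le hR.le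
  show Real.sqrt (seq11 R y n / R) ^ 2 * R = seq11 R y n
  rw [Real.sq_sqrt hnn]
  field_simp

lemma seq11_formula (R y : ℝ) (hR : 0 < R) (hy : 1 / R < y) (n : ℕ) :
    seq11 R y n = (R * y) ^ ((1/2 : ℝ) ^ n) / R := by
  have h0 : (0:ℝ) < 1 / R := by positivity
  have hRy : (0:ℝ) < R * y := by nlinarith
  induction n with
  | zero =>
    show y = (R * y) ^ ((1:ℝ)) / R
    rw [Real.rpow_one]
    field_simp
  | succ n ih =>
    show Real.sqrt (seq11 R y n / R) = _
    rw [ih]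
    have hp : (0:ℝ) ≤ (R * y) ^ ((1/2:ℝ) ^ n) := (Real.rpow_pos_of_pos hRy _).le
    rw [div_div, Real.sqrt_div hp, Real.sqrt_eq_rpow, ← Real.rpow_mul hRy.le,
      Real.sqrt_mul_self hR.le, pow_succ]

/-- For `R > 0` and `0 < k < 2`: if `f` satisfies
`f(x²R) = (k/(2xR))·f(x)` for all `x > 1/R` and `f` has a finite limit as `x → (1/R)⁺`,
then `f = 0` on `(1/R, ∞)`. -/
theorem stmt11 (R k : ℝ) (hR : 0 < R) (hk0 : 0 < k) (hk2 : k < 2)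
    (f : ℝ → ℝ)
    (hf : ∀ x, 1 / R < x → f (x ^ 2 * R) = (k / (2 * x * R)) * f x)
    (hlim : ∃ L : ℝ, Filter.Tendsto f (nhdsWithin (1 / R) (Set.Ioi (1 / R))) (nhds L)) :
    ∀ x, 1 / R < x → f x = 0 := by
  obtain ⟨L, hL⟩ := hlim
  intro y hy
  set g := seq11 R y with hg
  have h0 : (0:ℝ) < 1 / R := by positivity
  have hgt := seq11_gt R y hR hy
  have hRy : (0:ℝ) < R * y := by nlinarith
  have hRy1 : (1:ℝ) < R * y := by
    rw [show (1:ℝ) = R * (1/R) by field_simp]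
    exact (mul_lt_mul_iff_right₀ hR).2 hy
  -- g n → 1/R within Ioi (1/R)
  have hgt0 : Filter.Tendsto g Filter.atTop (nhds (1 / R)) := by
    have hform : g = fun n => (R * y) ^ ((1/2 : ℝ) ^ n) / R := by
      funext n; exact seq11_formula R y hR hy n
    rw [hform]
    have h1 : Filter.Tendsto (fun n : ℕ => ((1/2 : ℝ)) ^ n) Filter.atTop (nhds 0) :=
      tendsto_pow_atTop_nhds_zero_of_lt_one (by norm_num) (by norm_num)
    have h2 : ContinuousAt (fun t : ℝ => (R * y) ^ t) 0 :=
      Real.continuousAt_const_rpow hRy.ne'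
    have h3 := h2.tendsto.comp h1
    simp only [Function.comp, Real.rpow_zero] at h3
    have := h3.div_const R
    simpa using this
  have hgmem : ∀ n, g n ∈ Set.Ioi (1 / R) := fun n => hgt n
  have htend : Filter.Tendsto g Filter.atTop (nhdsWithin (1 / R) (Set.Ioi (1 / R))) :=
    tendsto_nhdsWithin_of_tendsto_nhds_of_eventually_within g hgt0
      (Filter.Eventually.of_forall hgmem)
  have hfg : Filter.Tendsto (fun n => f (g n)) Filter.atTop (nhds L) := hL.comp htend
  -- key bound
  have hbound : ∀ n, |f y| ≤ (k / 2) ^ n * |f (g n)| := by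
    intro n
    induction n with
    | zero => simp [hg, seq11]
    | succ n ih =>
      have hstep : f (g n) = (k / (2 * g (n+1) * R)) * f (g (n+1)) := by
        have := hf (g (n+1)) (hgt (n+1))
        rw [seq11_sq R y hR hy n] at this
        exact this
      have hpos : 0 < 2 * g (n+1) * R := by
        have := hgt (n+1); nlinarith
      have h1R : 1 < g (n+1) * R := (div_lt_iff₀ hR).1 (hgt (n+1))
      have hfac : k / (2 * g (n+1) * R) ≤ k / 2 := by
        gcongr
        nlinarith
      have hfacpos : 0 < k / (2 * g (n+1) * R) := by positivity
      calc |f y| ≤ (k/2) ^ n * |f (g n)| := ih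
        _ ≤ (k/2) ^ n * ((k/2) * |f (g (n+1))|) := by
            apply mul_le_mul_of_nonneg_left _ (by positivity)
            rw [hstep, abs_mul, abs_of_pos hfacpos]
            exact mul_le_mul_of_nonneg_right hfac (abs_nonneg _)
        _ = (k/2) ^ (n+1) * |f (g (n+1))| := by ring
  have hzero : Filter.Tendsto (fun n => (k/2) ^ n * |f (g n)|) Filter.atTop (nhds 0) := by
    have h1 : Filter.Tendsto (fun n : ℕ => (k/2) ^ n) Filter.atTop (nhds 0) :=
      tendsto_pow_atTop_nhds_zero_of_lt_one (by positivity) (by linarith)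
    have h2 : Filter.Tendsto (fun n => |f (g n)|) Filter.atTop (nhds |L|) := hfg.abs
    simpa using h1.mul h2
  have hle : |f y| ≤ 0 := ge_of_tendsto' hzero hbound
  exact abs_eq_zero.1 (le_antisymm hle (abs_nonneg _))
end

section
/- Let R > 0 and take k = 2. Suppose f : ℝ → ℝ satisfies f(x²R) = f(x)/(xR) for every x > 1/R and f is continuous at 1/R (from the right, within [1/R, ∞)). Then f(x) = f(1/R)/(xR) for every x ≥ 1/R. -/
/-- For `R > 0` and `k = 2`: if `f` satisfies `f(x²R) = f(x)/(xR)` for all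
`x > 1/R` and `f` is continuous at `1/R` from the right (within `[1/R, ∞)`), then
`f(x) = f(1/R)/(xR)` for all `x ≥ 1/R`. -/
theorem stmt13 (R : ℝ) (hR : 0 < R) (f : ℝ → ℝ)
    (hf : ∀ x, 1 / R < x → f (x ^ 2 * R) = f x / (x * R))
    (hcont : ContinuousWithinAt f (Set.Ici (1 / R)) (1 / R)) :
    ∀ x, 1 / R ≤ x → f x = f (1 / R) / (x * R) := by
  intro x hx
  rcases eq_or_lt_of_le hx with h | h
  · rw [← h]
    field_simp
  · -- x > 1/R
    have hRne : R ≠ 0 := ne_of_gt hR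
    set a : ℝ := x * R with ha_def
    have ha : 1 < a := by
      rw [ha_def]
      calc (1:ℝ) = (1/R) * R := by field_simp
      _ < x * R := by exact mul_lt_mul_of_pos_right h hR
    have ha0 : 0 < a := lt_trans one_pos ha
    set c : ℕ → ℝ := fun n => a ^ ((1/2 : ℝ) ^ n) with hc_def
    have hc1 : ∀ n, 1 < c n := by
      intro n
      have : 0 < (1/2 : ℝ) ^ n := by positivity
      exact Real.one_lt_rpow_iff_of_pos ha0 |>.mpr (Or.inl ⟨ha, this⟩)
    have hc0 : ∀ n, 0 < c n := fun n => lt_trans one_pos (hc1 n)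
    have hcR : ∀ n, 1 / R < c n / R := by
      intro n
      have := hc1 n
      gcongr
    -- key: c (n+1) ^ 2 = c n
    have hsq : ∀ n, (c (n+1)) ^ 2 = c n := by
      intro n
      simp only [hc_def]
      rw [← Real.rpow_natCast (a ^ ((1/2:ℝ)^(n+1))) 2, ← Real.rpow_mul (le_of_lt ha0)]
      norm_num
      ring_nf
    -- invariance: H n := c n * f (c n / R) is constant
    have hH : ∀ n, c n * f (c n / R) = a * f x := by
      intro n
      induction n with
      | zero =>
        simp only [hc_def, pow_zero, Real.rpow_one]
        rw [ha_def]
        field_simp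
      | succ n ih =>
        have h1 := hf (c (n+1) / R) (hcR (n+1))
        have h2 : (c (n+1) / R) ^ 2 * R = c n / R := by
          rw [← hsq n]; field_simp
        rw [h2] at h1
        have : c n * f (c n / R) = c n * (f (c (n+1)/R) / (c (n+1)/R * R)) := by rw [h1]
        rw [← ih, this, ← hsq n]
        have hcn1 : c (n+1) ≠ 0 := ne_of_gt (hc0 (n+1))
        field_simp
    -- limit: c n → 1
    have hexp : Filter.Tendsto (fun n : ℕ => (1/2 : ℝ) ^ n) Filter.atTop (nhds 0) := by
      apply tendsto_pow_atTop_nhds_zero_of_lt_one <;> norm_num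
    have hctend : Filter.Tendsto c Filter.atTop (nhds 1) := by
      have h1 : Filter.Tendsto (fun n : ℕ => a ^ ((1/2:ℝ)^n)) Filter.atTop (nhds (a ^ (0:ℝ))) :=
        (Real.continuousAt_const_rpow (ne_of_gt ha0)).tendsto.comp hexp
      rw [Real.rpow_zero] at h1
      exact h1
    have hxtend : Filter.Tendsto (fun n => c n / R) Filter.atTop (nhds (1/R)) :=
      hctend.div_const R
    have hmem : ∀ n, c n / R ∈ Set.Ici (1/R) := fun n => le_of_lt (hcR n)
    have hftend : Filter.Tendsto (fun n => f (c n / R)) Filter.atTop (nhds (f (1/R))) := by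
      apply hcont.tendsto.comp
      rw [tendsto_nhdsWithin_iff]
      exact ⟨hxtend, Filter.Eventually.of_forall hmem⟩
    have hHtend : Filter.Tendsto (fun n => c n * f (c n / R)) Filter.atTop
        (nhds (1 * f (1/R))) := hctend.mul hftend
    have hconst : Filter.Tendsto (fun _ : ℕ => a * f x) Filter.atTop (nhds (a * f x)) :=
      tendsto_const_nhds
    have heq : a * f x = 1 * f (1/R) := by
      apply tendsto_nhds_unique _ hHtend
      simpa only [hH] using hconst
    rw [one_mul] at heq
    rw [← heq, ha_def]
    field_simp [ne_of_gt (lt_trans (by positivity) h : (0:ℝ) < x)]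
end

section
/- Let R > 0 and let c be a real number with 0 < c ≤ 1. Let p : ℝ → ℝ be continuously differentiable and periodic with period 1, and define f on (1/R, ∞) by f(x) = ((ln(xR))^c / (xR)) · p(log₂(ln(xR))). If the derivative f'(x) tends to a finite limit as x → (1/R)⁺, then p is constant. -/
open Real Filter Set

/-- `2 ^ (s * a) → 0` as `s → -∞`, for `a > 0`. -/
lemma stmt16_aux_rpow {a : ℝ} (ha : 0 < a) :
    Tendsto (fun s : ℝ => (2:ℝ) ^ (s * a)) atBot (nhds 0) := by
  have h2 : ∀ s : ℝ, (2:ℝ) ^ (s * a) = Real.exp (s * (a * Real.log 2)) := by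
    intro s
    rw [Real.rpow_def_of_pos (by norm_num)]
    ring_nf
  simp only [h2]
  apply Real.tendsto_exp_atBot.comp
  have hpos : 0 < a * Real.log 2 := mul_pos ha (Real.log_pos (by norm_num))
  exact Tendsto.atBot_mul_const hpos tendsto_id

/-- helper : `s - n → -∞`. -/
lemma tendsto_sub_nat_atBot (s : ℝ) : Tendsto (fun n : ℕ => s - (n:ℝ)) atTop atBot := by
  apply tendsto_atBot_add_const_left
  exact tendsto_neg_atBot_iff.mpr tendsto_natCast_atTop_atTop

/-- A 1-periodic function with a limit at `-∞` is constant. -/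
lemma stmt16_aux_const (q : ℝ → ℝ) (hper : ∀ s, q (s + 1) = q s) (L : ℝ)
    (hlim : Tendsto q atBot (nhds L)) : ∀ s, q s = L := by
  intro s
  have hq : ∀ n : ℕ, q (s - n) = q s := by
    intro n
    induction n with
    | zero => simp
    | succ k ih =>
      have := hper (s - (k+1))
      push_cast
      push_cast at ih
      rw [show s - ((k:ℝ)+1) + 1 = s - k by ring] at this
      rw [← ih, ← this]
  have h1 : Tendsto (fun n : ℕ => q (s - n)) atTop (nhds L) := by
    apply hlim.comp
    exact tendsto_sub_nat_atBot s
  have h2 : Tendsto (fun _ : ℕ => q s) atTop (nhds (q s)) := tendsto_const_nhds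
  have h3 := h1.congr (fun n => hq n)
  exact tendsto_nhds_unique h2 h3

/-- Constancy from the ODE `c·p + p'/ln 2 = L'`. -/
lemma stmt16_aux_ode (c : ℝ) (hc0 : 0 < c) (p : ℝ → ℝ) (hp : ContDiff ℝ 1 p)
    (hper : ∀ s, p (s + 1) = p s) (L' : ℝ)
    (hq : ∀ s, c * p s + deriv p s / Real.log 2 = L') :
    ∀ s t, p s = p t := by
  have hlog2 : (0:ℝ) < Real.log 2 := Real.log_pos (by norm_num)
  have hdiff : Differentiable ℝ p := hp.differentiable one_ne_zero
  have hp' : ∀ s, deriv p s = Real.log 2 * (L' - c * p s) := by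
    intro s
    have := hq s
    field_simp at this
    linarith
  set M := L' / c with hM
  have hcM : c * M = L' := by rw [hM, mul_div_assoc', mul_div_cancel_left₀ _ (ne_of_gt hc0)]
  set H : ℝ → ℝ := fun s => (p s - M) * Real.exp (c * Real.log 2 * s) with hH
  have hHd : ∀ s, HasDerivAt H 0 s := by
    intro s
    have h1 : HasDerivAt (fun s => p s - M) (deriv p s) s := ((hdiff s).hasDerivAt).sub_const M
    have h2 : HasDerivAt (fun s => Real.exp (c * Real.log 2 * s))
        (Real.exp (c * Real.log 2 * s) * (c * Real.log 2)) s := by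
      simpa [Function.comp_def] using (Real.hasDerivAt_exp (c * Real.log 2 * s)).comp s
        ((hasDerivAt_id s).const_mul (c * Real.log 2))
    have h3 := h1.mul h2
    refine h3.congr_deriv ?_
    rw [hp' s, ← hcM]
    ring
  have hHc : ∀ x y : ℝ, H x = H y :=
    is_const_of_deriv_eq_zero (fun s => (hHd s).differentiableAt) (fun s => (hHd s).deriv)
  -- from H 1 = H 0 and p 1 = p 0 deduce p 0 = M
  have hp10 : p 1 = p 0 := by simpa using hper 0
  have h10 := hHc 1 0
  simp only [hH] at h10
  rw [hp10] at h10
  have hexp1 : (1:ℝ) < Real.exp (c * Real.log 2) :=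
    Real.one_lt_exp_iff.mpr (mul_pos hc0 hlog2)
  have hp0 : p 0 = M := by
    rw [mul_one, mul_zero, Real.exp_zero, mul_one] at h10
    have hz : (p 0 - M) * (Real.exp (c * Real.log 2) - 1) = 0 := by linear_combination h10
    rcases mul_eq_zero.mp hz with h | h
    · linarith
    · linarith
  -- conclude p s = M for all s
  have hfinal : ∀ s, p s = M := by
    intro s
    have := hHc s 0
    simp only [hH, hp0, mul_zero, Real.exp_zero, sub_self, zero_mul, mul_one] at this
    rcases mul_eq_zero.mp this with h | h
    · linarith
    · exact absurd h (Real.exp_ne_zero _)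
  intro s t; rw [hfinal s, hfinal t]

/-- For `R > 0`, `0 < c ≤ 1`, and `p` continuously differentiable and
1-periodic, define `f(x) = ((ln(xR))^c / (xR)) · p(log₂(ln(xR)))` on `(1/R, ∞)`. If
`f'(x)` tends to a finite limit as `x → (1/R)⁺`, then `p` is constant. -/
theorem stmt16 (R : ℝ) (hR : 0 < R) (c : ℝ) (hc0 : 0 < c) (hc1 : c ≤ 1)
    (p : ℝ → ℝ) (hp : ContDiff ℝ 1 p) (hper : ∀ s, p (s + 1) = p s)
    (f : ℝ → ℝ)
    (hf : ∀ x, 1 / R < x →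
      f x = ((Real.log (x * R)) ^ c / (x * R)) * p (Real.logb 2 (Real.log (x * R))))
    (L : ℝ)
    (hlim : Filter.Tendsto (deriv f) (nhdsWithin (1 / R) (Set.Ioi (1 / R))) (nhds L)) :
    ∀ s t, p s = p t := by
  have hlog2 : (0:ℝ) < Real.log 2 := Real.log_pos (by norm_num)
  have hdiff : Differentiable ℝ p := hp.differentiable one_ne_zero
  set q : ℝ → ℝ := fun s => c * p s + deriv p s / Real.log 2 with hqdef
  -- Step 1: key derivative identity
  have key : ∀ s : ℝ, q s =
      ((2:ℝ)^s) ^ (1 - c) * Real.exp (2 * (2:ℝ)^s) *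
        deriv f (Real.exp ((2:ℝ)^s) / R) / R + (2:ℝ)^s * p s := by
    intro s
    set u : ℝ := (2:ℝ) ^ s with hu_def
    have hu : 0 < u := Real.rpow_pos_of_pos (by norm_num) s
    set E : ℝ := Real.exp u with hE_def
    have hE : 0 < E := Real.exp_pos u
    set X : ℝ := E / R with hX_def
    have hXR : X * R = E := div_mul_cancel₀ E (ne_of_gt hR)
    have hXRpos : 0 < X * R := by rw [hXR]; exact hE
    have hXmem : 1 / R < X := by
      rw [hX_def]
      exact (div_lt_div_iff_of_pos_right hR).mpr (Real.one_lt_exp_iff.mpr hu)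
    have hlog : Real.log (X * R) = u := by rw [hXR, hE_def, Real.log_exp]
    have hpt : Real.logb 2 (Real.log (X * R)) = s := by
      rw [hlog, hu_def]
      exact Real.logb_rpow (by norm_num) (by norm_num)
    -- derivative of inner function x ↦ log (x * R)
    have h1 : HasDerivAt (fun x : ℝ => Real.log (x * R)) ((X * R)⁻¹ * (1 * R)) X := by
      have hmul : HasDerivAt (fun x : ℝ => x * R) (1 * R) X := (hasDerivAt_id X).mul_const R
      exact (Real.hasDerivAt_log (ne_of_gt hXRpos)).comp X hmul
    -- derivative of x ↦ (log (x*R)) ^ c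
    have hrp : HasDerivAt (fun y : ℝ => y ^ c) (c * u ^ (c - 1)) (Real.log (X * R)) := by
      rw [hlog]
      exact Real.hasDerivAt_rpow_const (Or.inl (ne_of_gt hu))
    have hA : HasDerivAt (fun x : ℝ => (Real.log (x * R)) ^ c)
        (c * u ^ (c - 1) * ((X * R)⁻¹ * (1 * R))) X := by have := hrp.comp X h1; exact this
    -- derivative of x ↦ logb 2 (log (x * R))
    have hlb : HasDerivAt (fun x : ℝ => Real.logb 2 (Real.log (x * R)))
        ((X * R)⁻¹ * (1 * R) / u / Real.log 2) X := by
      have hne : Real.log (X * R) ≠ 0 := by rw [hlog]; exact ne_of_gt hu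
      have := (h1.log hne).div_const (Real.log 2)
      rw [hlog] at this
      simpa [Real.logb] using this
    have hpd : HasDerivAt p (deriv p s) (Real.logb 2 (Real.log (X * R))) := by
      rw [hpt]
      exact (hdiff s).hasDerivAt
    have hC : HasDerivAt (fun x : ℝ => p (Real.logb 2 (Real.log (x * R))))
        (deriv p s * ((X * R)⁻¹ * (1 * R) / u / Real.log 2)) X := by
      have := hpd.comp X hlb
      simpa [Function.comp_def] using this
    -- derivative of x ↦ (log (x*R))^c / (x*R)
    have hmul : HasDerivAt (fun x : ℝ => x * R) (1 * R) X := (hasDerivAt_id X).mul_const R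
    have hG1 : HasDerivAt (fun x : ℝ => (Real.log (x * R)) ^ c / (x * R))
        ((c * u ^ (c - 1) * ((X * R)⁻¹ * (1 * R)) * (X * R) - u ^ c * (1 * R)) / (X * R) ^ 2)
        X := by
      have := hA.div hmul (ne_of_gt hXRpos)
      rw [hlog] at this
      exact this
    -- full derivative
    have hF : HasDerivAt
        (fun x : ℝ => (Real.log (x * R)) ^ c / (x * R) * p (Real.logb 2 (Real.log (x * R))))
        ((c * u ^ (c - 1) * ((X * R)⁻¹ * (1 * R)) * (X * R) - u ^ c * (1 * R)) / (X * R) ^ 2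
            * p s
          + u ^ c / (X * R) * (deriv p s * ((X * R)⁻¹ * (1 * R) / u / Real.log 2))) X := by
      have := hG1.mul hC
      rw [hpt, hlog] at this
      exact this
    -- deriv f X equals this
    have hmemnhds : Set.Ioi (1 / R) ∈ nhds X := isOpen_Ioi.mem_nhds hXmem
    have hfeq : f =ᶠ[nhds X]
        (fun x : ℝ => (Real.log (x * R)) ^ c / (x * R) * p (Real.logb 2 (Real.log (x * R)))) :=
      Filter.eventuallyEq_of_mem hmemnhds (fun y hy => hf y hy)
    have hderiv : deriv f X =
        (c * u ^ (c - 1) * ((X * R)⁻¹ * (1 * R)) * (X * R) - u ^ c * (1 * R)) / (X * R) ^ 2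
            * p s
          + u ^ c / (X * R) * (deriv p s * ((X * R)⁻¹ * (1 * R) / u / Real.log 2)) := by
      rw [hfeq.deriv_eq]
      exact hF.deriv
    -- rpow identities
    have hpow4 : u ^ (c - 1) * u ^ (1:ℝ) = u ^ c := by
      rw [← Real.rpow_add hu]
      norm_num
    rw [Real.rpow_one] at hpow4
    have hpow1 : u ^ (1 - c) * u ^ (c - 1) = 1 := by
      rw [← Real.rpow_add hu]
      norm_num
    have hexp2u : Real.exp (2 * u) = E ^ 2 := by
      rw [two_mul, Real.exp_add, sq, hE_def]
    -- simplify the derivative expression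
    set A : ℝ := u ^ (c - 1) with hA_def
    set T : ℝ := c * p s - u * p s + deriv p s / Real.log 2 with hT_def
    have hlog2 : (0:ℝ) < Real.log 2 := Real.log_pos (by norm_num)
    have hD : deriv f X = R / E ^ 2 * (A * T) := by
      rw [hderiv, hXR, ← hpow4, hT_def]
      field_simp
    -- finish
    rw [hD, hexp2u]
    have hfin : u ^ (1 - c) * E ^ 2 * (R / E ^ 2 * (A * T)) / R = u ^ (1 - c) * A * T := by
      field_simp
    rw [hfin, hpow1, one_mul]
    simp only [hqdef, hT_def]
    ring
  -- Step 2: tendsto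
  set L' : ℝ := if c = 1 then L / R else 0 with hL'
  have hu0 : Tendsto (fun s : ℝ => (2:ℝ) ^ s) atBot (nhds 0) := by
    have := stmt16_aux_rpow one_pos
    simpa using this
  have hqlim : Tendsto q atBot (nhds L') := by
    -- the composed point tends to 1/R from the right
    have hmem : ∀ s : ℝ, Real.exp ((2:ℝ) ^ s) / R ∈ Set.Ioi (1 / R) := by
      intro s
      have hu : (0:ℝ) < (2:ℝ) ^ s := Real.rpow_pos_of_pos (by norm_num) s
      exact (div_lt_div_iff_of_pos_right hR).mpr (Real.one_lt_exp_iff.mpr hu)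
    have hr : Tendsto (fun s : ℝ => deriv f (Real.exp ((2:ℝ) ^ s) / R)) atBot (nhds L) := by
      apply hlim.comp
      rw [tendsto_nhdsWithin_iff]
      constructor
      · have h1 : Tendsto (fun s : ℝ => Real.exp ((2:ℝ) ^ s)) atBot (nhds 1) := by
          have := (Real.continuous_exp.tendsto 0).comp hu0
          simpa [Function.comp_def] using this
        have := h1.div_const R
        simpa using this
      · exact Filter.Eventually.of_forall hmem
    -- exp (2 * 2^s) → 1
    have hexp2 : Tendsto (fun s : ℝ => Real.exp (2 * (2:ℝ) ^ s)) atBot (nhds 1) := by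
      have h0 : Tendsto (fun s : ℝ => 2 * (2:ℝ) ^ s) atBot (nhds 0) := by
        have := hu0.const_mul 2
        simpa using this
      have := (Real.continuous_exp.tendsto 0).comp h0
      simpa [Function.comp_def] using this
    -- 2^s * p s → 0  (p is bounded)
    have hbdd : ∃ C : ℝ, ∀ s : ℝ, |p s| ≤ C := by
      obtain ⟨C, hC⟩ := isCompact_Icc.exists_bound_of_continuousOn
        (s := Set.Icc (0:ℝ) 1) hp.continuous.continuousOn
      refine ⟨C, fun s => ?_⟩
      have hperF : Function.Periodic p 1 := hper
      have h1 : p s = p (Int.fract s) := by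
        have := hperF.sub_int_mul_eq (x := s) ⌊s⌋
        rw [mul_one] at this
        rw [Int.fract]
        exact this.symm
      rw [h1]
      have := hC (Int.fract s) ⟨Int.fract_nonneg s, le_of_lt (Int.fract_lt_one s)⟩
      simpa using this
    obtain ⟨C, hC⟩ := hbdd
    have hterm2 : Tendsto (fun s : ℝ => (2:ℝ) ^ s * p s) atBot (nhds 0) := by
      apply squeeze_zero_norm (a := fun s : ℝ => (2:ℝ) ^ s * C)
      · intro s
        have hu : (0:ℝ) < (2:ℝ) ^ s := Real.rpow_pos_of_pos (by norm_num) s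
        rw [Real.norm_eq_abs, abs_mul, abs_of_pos hu]
        exact mul_le_mul_of_nonneg_left (hC s) (le_of_lt hu)
      · have := hu0.mul_const C
        simpa using this
    -- main term
    have hterm1 : Tendsto
        (fun s : ℝ => ((2:ℝ) ^ s) ^ (1 - c) * Real.exp (2 * (2:ℝ) ^ s) *
          deriv f (Real.exp ((2:ℝ) ^ s) / R) / R) atBot (nhds L') := by
      rcases eq_or_lt_of_le hc1 with hceq | hclt
      · -- c = 1
        subst hceq
        have h : Tendsto (fun s : ℝ => Real.exp (2 * (2:ℝ) ^ s) *
            deriv f (Real.exp ((2:ℝ) ^ s) / R) / R) atBot (nhds (L / R)) := by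
          simpa using (hexp2.mul hr).div_const R
        have hval : L' = L / R := by rw [hL']; norm_num
        rw [hval]
        exact h.congr (fun s => by simp)
      · -- c < 1
        have hB : Tendsto (fun s : ℝ => ((2:ℝ) ^ s) ^ (1 - c)) atBot (nhds 0) := by
          have h1 : ∀ s : ℝ, ((2:ℝ) ^ s) ^ (1 - c) = (2:ℝ) ^ (s * (1 - c)) := by
            intro s
            rw [Real.rpow_mul (by norm_num : (0:ℝ) ≤ 2)]
          simp only [h1]
          exact stmt16_aux_rpow (by linarith)
        have := ((hB.mul hexp2).mul hr).div_const R
        rw [hL', if_neg (ne_of_lt hclt)]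
        simpa using this
    have := hterm1.add hterm2
    rw [add_zero] at this
    exact this.congr (fun s => (key s).symm)

  -- Step 3: q is periodic, hence constant
  have hqper : ∀ s, q (s + 1) = q s := by
    intro s
    have hd : deriv p (s + 1) = deriv p s := by
      have : (fun t => p (t + 1)) = p := funext hper
      calc deriv p (s + 1) = deriv (fun t => p (t + 1)) s := (deriv_comp_add_const p 1 s).symm
        _ = deriv p s := by rw [this]
    simp only [hqdef, hper s, hd]
  have hqconst : ∀ s, q s = L' := stmt16_aux_const q hqper L' hqlim
  exact stmt16_aux_ode c hc0 p hp hper L' (fun s => hqconst s)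
end
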